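/- arXiv:hep-ph/9804333 — 3 statements merged into one kernel-verified Lean document; each statement's English description precedes it below -/
import Mathlib

section
/- For n ≥ 2 distinct linear propagators P_{l,i} = α_i + β_i l + iη with β_i ≠ 0 and η > 0, one has (1/(2πi)) ∫_{-∞}^{∞} dl ∏_{i=1}^{n} 1/P_{l,i} = Σ_{i=1}^{n-1} (θ(-β_i) - θ(-β_n)) / (β_i ∏_{j≠i} P_{l,j}(l^{(i)})), where l^{(i)} = -(α_i + iη)/β_i and θ is the Heaviside function. -/
open Complex MeasureTheory Real Finset

/-- The Heaviside step function: `1` for positive arguments, `0` otherwise. -/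
noncomputable def heaviside (x : ℝ) : ℝ := if 0 < x then 1 else 0

section AuxLemmas

open Filter Topology

lemma partial_fractions {ι : Type*} [DecidableEq ι] (z : ι → ℂ) (s : Finset ι) (hs : s.Nonempty) :
    Set.InjOn z s → ∀ l : ℂ, (∀ i ∈ s, l ≠ z i) →
    ∏ i ∈ s, (l - z i)⁻¹ = ∑ i ∈ s, (∏ j ∈ s.erase i, (z i - z j)⁻¹) * (l - z i)⁻¹ := by
  induction hs using Finset.Nonempty.cons_induction with
  | singleton a => intro _ l hl; simp
  | cons a t ha ht IH =>
    intro hinj l hl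
    have hinj' : Set.InjOn z t := hinj.mono (by simp [Finset.subset_iff])
    have haz : ∀ i ∈ t, z a ≠ z i := by
      intro i hi h
      exact ha (by rwa [hinj (by simp) (by simp [hi]) h])
    have hla : l ≠ z a := hl a (by simp)
    have hlt : ∀ i ∈ t, l ≠ z i := fun i hi => hl i (by simp [hi])
    have IHl := IH hinj' l hlt
    have IHa := IH hinj' (z a) haz
    rw [Finset.prod_cons, Finset.sum_cons, Finset.erase_cons, IHl, IHa, Finset.mul_sum,
      Finset.sum_mul, ← Finset.sum_add_distrib]
    refine Finset.sum_congr rfl fun i hi => ?_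
    have hia : i ≠ a := fun h => ha (h ▸ hi)
    have h1 : (Finset.cons a t ha).erase i = insert a (t.erase i) := by
      rw [Finset.cons_eq_insert, Finset.erase_insert_of_ne hia.symm]
    rw [h1, Finset.prod_insert (by simp [ha])]
    have h2 : z i - z a ≠ 0 := sub_ne_zero.mpr fun h => (haz i hi h.symm).elim
    have h3 : l - z a ≠ 0 := sub_ne_zero.mpr hla
    have h4 : l - z i ≠ 0 := sub_ne_zero.mpr (hlt i hi)
    have h5 : z a - z i ≠ 0 := sub_ne_zero.mpr (haz i hi)
    generalize (∏ j ∈ t.erase i, (z i - z j)⁻¹) = c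
    field_simp
    ring

lemma sum_residues_zero {ι : Type*} [DecidableEq ι] (z : ι → ℂ) (s : Finset ι)
    (hcard : 2 ≤ s.card) (hinj : Set.InjOn z s) :
    ∑ i ∈ s, ∏ j ∈ s.erase i, (z i - z j)⁻¹ = 0 := by
  obtain ⟨a, ha⟩ := Finset.card_pos.mp (by omega : 0 < s.card)
  set t := s.erase a with htdef
  have hat : a ∉ t := Finset.notMem_erase a s
  have hts : t ⊆ s := Finset.erase_subset a s
  have htne : t.Nonempty := Finset.card_pos.mp (by
    have h := Finset.card_erase_of_mem ha
    simp only [htdef]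
    omega)
  have hinj' : Set.InjOn z t := hinj.mono (by exact_mod_cast hts)
  have haz : ∀ i ∈ t, z a ≠ z i := by
    intro i hi h
    have : a = i := hinj ha (hts hi) h
    exact hat (this ▸ hi)
  rw [← Finset.add_sum_erase s _ ha, ← htdef]
  have IHa := partial_fractions z t htne hinj' (z a) haz
  have h1 : ∀ i ∈ t, ∏ j ∈ s.erase i, (z i - z j)⁻¹
      = (z i - z a)⁻¹ * ∏ j ∈ t.erase i, (z i - z j)⁻¹ := by
    intro i hi
    have hia : a ∈ s.erase i := Finset.mem_erase.mpr ⟨fun h => hat (h ▸ hi), ha⟩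
    rw [← Finset.mul_prod_erase _ _ hia, Finset.erase_right_comm]
  rw [Finset.sum_congr rfl h1, IHa]
  rw [← Finset.sum_add_distrib]
  rw [Finset.sum_eq_zero]
  intro i hi
  have : z i - z a = -(z a - z i) := by ring
  rw [this, inv_neg]
  ring


lemma norm_ofReal_sub (x a b : ℝ) :
    ‖(x:ℂ) - (a + b*I)‖ = Real.sqrt ((x-a)^2 + b^2) := by
  rw [Complex.norm_def, Complex.normSq_apply]
  congr 1
  simp only [Complex.sub_re, Complex.ofReal_re, Complex.add_re, Complex.mul_re, Complex.I_re,
    Complex.ofReal_im, Complex.I_im, Complex.sub_im, Complex.add_im, Complex.mul_im]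
  ring

lemma sub_ne_zero_of_im (x a b : ℝ) (hb : b ≠ 0) : (x:ℂ) - (a + b*I) ≠ 0 := by
  intro h
  apply hb
  have := congrArg Complex.im h
  simpa using this

lemma integrable_aux (a b c d : ℝ) (hb : b ≠ 0) (hd : d ≠ 0) :
    Integrable (fun x : ℝ => ((x:ℂ) - (a + b*I))⁻¹ - ((x:ℂ) - (c + d*I))⁻¹) := by
  have hz : ∀ x : ℝ, (x:ℂ) - (a + b*I) ≠ 0 := fun x => sub_ne_zero_of_im x a b hb
  have hw : ∀ x : ℝ, (x:ℂ) - (c + d*I) ≠ 0 := fun x => sub_ne_zero_of_im x c d hd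
  have hcont : Continuous fun x : ℝ => ((x:ℂ) - (a + b*I))⁻¹ - ((x:ℂ) - (c + d*I))⁻¹ :=
    ((Complex.continuous_ofReal.sub continuous_const).inv₀ hz).sub
      ((Complex.continuous_ofReal.sub continuous_const).inv₀ hw)
  set K1 : ℝ := (2*b^2 + 1 + 2*a^2)/b^2 with hK1def
  set K2 : ℝ := (2*d^2 + 1 + 2*c^2)/d^2 with hK2def
  have hK1 : 0 < K1 := by rw [hK1def]; positivity
  have hK2 : 0 < K2 := by rw [hK2def]; positivity
  set C : ℝ := ‖(a + b*I) - (c + d*I)‖ * (Real.sqrt K1 * Real.sqrt K2) with hCdef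
  apply (integrable_inv_one_add_sq.const_mul C).mono' hcont.aestronglyMeasurable
  filter_upwards with x
  have key1 : Real.sqrt (1+x^2) ≤ Real.sqrt K1 * ‖(x:ℂ) - (a + b*I)‖ := by
    rw [norm_ofReal_sub, ← Real.sqrt_mul hK1.le]
    apply Real.sqrt_le_sqrt
    rw [hK1def, div_mul_eq_mul_div, le_div_iff₀ (by positivity)]
    nlinarith [sq_nonneg (x - 2*a), sq_nonneg (b*(x-2*a)), sq_nonneg (b*(x-a)), sq_nonneg (a*b)]
  have key2 : Real.sqrt (1+x^2) ≤ Real.sqrt K2 * ‖(x:ℂ) - (c + d*I)‖ := by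
    rw [norm_ofReal_sub, ← Real.sqrt_mul hK2.le]
    apply Real.sqrt_le_sqrt
    rw [hK2def, div_mul_eq_mul_div, le_div_iff₀ (by positivity)]
    nlinarith [sq_nonneg (x - 2*c), sq_nonneg (d*(x-2*c)), sq_nonneg (d*(x-c)), sq_nonneg (c*d)]
  have hfx : ((x:ℂ) - (a + b*I))⁻¹ - ((x:ℂ) - (c + d*I))⁻¹
      = ((a + b*I) - (c + d*I)) / (((x:ℂ) - (a + b*I)) * ((x:ℂ) - (c + d*I))) := by
    rw [inv_sub_inv (hz x) (hw x)]
    congr 1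
    ring
  rw [hfx, norm_div, norm_mul]
  have hXpos : 0 < ‖(x:ℂ) - (a + b*I)‖ := norm_pos_iff.mpr (hz x)
  have hYpos : 0 < ‖(x:ℂ) - (c + d*I)‖ := norm_pos_iff.mpr (hw x)
  have hT : (1+x^2) ≤ (Real.sqrt K1 * ‖(x:ℂ) - (a + b*I)‖) *
      (Real.sqrt K2 * ‖(x:ℂ) - (c + d*I)‖) := by
    have h := mul_le_mul key1 key2 (Real.sqrt_nonneg _) (by positivity)
    rwa [Real.mul_self_sqrt (by positivity)] at h
  rw [div_le_iff₀ (by positivity)]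
  have h3 : 1 ≤ (1+x^2)⁻¹ * ((Real.sqrt K1 * ‖(x:ℂ) - (a + b*I)‖) *
      (Real.sqrt K2 * ‖(x:ℂ) - (c + d*I)‖)) := by
    have h := mul_le_mul_of_nonneg_left hT (by positivity : (0:ℝ) ≤ (1+x^2)⁻¹)
    rwa [inv_mul_cancel₀ (by positivity : (0:ℝ) < 1+x^2).ne'] at h
  calc ‖(a + b*I) - (c + d*I)‖ = ‖(a + b*I) - (c + d*I)‖ * 1 := (mul_one _).symm
    _ ≤ ‖(a + b*I) - (c + d*I)‖ * ((1+x^2)⁻¹ * ((Real.sqrt K1 * ‖(x:ℂ) - (a + b*I)‖) *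
        (Real.sqrt K2 * ‖(x:ℂ) - (c + d*I)‖))) :=
      mul_le_mul_of_nonneg_left h3 (norm_nonneg _)
    _ = C * (1 + x^2)⁻¹ * (‖(x:ℂ) - (a + b*I)‖ * ‖(x:ℂ) - (c + d*I)‖) := by
      rw [hCdef]; ring

lemma inv_ofReal_sub_eq (x a b : ℝ) (hb : b ≠ 0) :
    ((x:ℂ) - (a + b*I))⁻¹
      = ((x-a)/((x-a)^2+b^2) : ℝ) + ((b/((x-a)^2+b^2) : ℝ)) * I := by
  have hq : ((x-a)^2+b^2 : ℝ) ≠ 0 := by positivity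
  apply inv_eq_of_mul_eq_one_right
  have hq' : (((x-a)^2+b^2 : ℝ) : ℂ) ≠ 0 := by exact_mod_cast hq
  push_cast at hq' ⊢
  field_simp
  ring_nf
  rw [Complex.I_sq]
  ring

lemma tendsto_inv_atBot_zero' : Tendsto (fun x : ℝ => x⁻¹) atBot (𝓝 0) := by
  have h1 : Tendsto (fun x : ℝ => -x) atBot atTop := tendsto_neg_atBot_atTop
  have h2 : Tendsto (fun x : ℝ => (-x)⁻¹) atBot (𝓝 0) := tendsto_inv_atTop_zero.comp h1
  have h3 := h2.neg
  simp only [neg_zero] at h3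
  exact h3.congr fun x => by rw [inv_neg, neg_neg]

lemma ratio_tendsto (a b c d : ℝ) (hd : d ≠ 0) (l : Filter ℝ)
    (h0 : Tendsto (fun x : ℝ => x⁻¹) l (𝓝 0)) (hne : ∀ᶠ x in l, x ≠ (0:ℝ)) :
    Tendsto (fun x => ((x-a)^2+b^2)/((x-c)^2+d^2)) l (𝓝 1) := by
  set g : ℝ → ℝ := fun u => ((1-a*u)^2+(b*u)^2)/((1-c*u)^2+(d*u)^2) with hgdef
  have hg : Tendsto g (𝓝 0) (𝓝 1) := by
    have hc : ContinuousAt g 0 := by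
      apply ContinuousAt.div (by fun_prop) (by fun_prop)
      norm_num
    have hg0 : g 0 = 1 := by norm_num [hgdef]
    simpa [hg0] using hc.tendsto
  apply (hg.comp h0).congr'
  filter_upwards [hne] with x hx
  have hq2 : ((x-c)^2+d^2 : ℝ) ≠ 0 := by positivity
  simp only [Function.comp, hgdef]
  rw [div_eq_div_iff (by positivity) hq2]
  field_simp

lemma arctan_lim_top (a b : ℝ) (hb : b ≠ 0) :
    Tendsto (fun x => Real.arctan ((x-a)/b)) atTop
      (𝓝 ((if 0 < b then (1:ℝ) else -1) * (π/2))) := by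
  have hsub : Tendsto (fun x : ℝ => x - a) atTop atTop :=
    tendsto_atTop_add_const_right _ (-a) tendsto_id
  rcases lt_or_gt_of_ne hb with h | h
  · have h1 : Tendsto (fun x : ℝ => (x-a)/b) atTop atBot := hsub.atTop_div_const_of_neg h
    have h2 := (tendsto_nhds_of_tendsto_nhdsWithin tendsto_arctan_atBot).comp h1
    simpa [if_neg (not_lt.mpr h.le), Function.comp_def] using h2
  · have h1 : Tendsto (fun x : ℝ => (x-a)/b) atTop atTop := hsub.atTop_div_const h
    have h2 := (tendsto_nhds_of_tendsto_nhdsWithin tendsto_arctan_atTop).comp h1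
    simpa [if_pos h, Function.comp_def] using h2

lemma arctan_lim_bot (a b : ℝ) (hb : b ≠ 0) :
    Tendsto (fun x => Real.arctan ((x-a)/b)) atBot
      (𝓝 (-((if 0 < b then (1:ℝ) else -1) * (π/2)))) := by
  have hsub : Tendsto (fun x : ℝ => x - a) atBot atBot :=
    tendsto_atBot_add_const_right _ (-a) tendsto_id
  rcases lt_or_gt_of_ne hb with h | h
  · have h1 : Tendsto (fun x : ℝ => (x-a)/b) atBot atTop := by
      have := hsub.atBot_div_const (neg_pos.mpr h)
      have h2 : Tendsto (fun x : ℝ => -((x-a)/(-b))) atBot atTop :=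
        tendsto_neg_atBot_atTop.comp this
      exact h2.congr fun x => by rw [div_neg, neg_neg]
    have h2 := (tendsto_nhds_of_tendsto_nhdsWithin tendsto_arctan_atTop).comp h1
    simpa [if_neg (not_lt.mpr h.le), Function.comp_def] using h2
  · have h1 : Tendsto (fun x : ℝ => (x-a)/b) atBot atBot := hsub.atBot_div_const h
    have h2 := (tendsto_nhds_of_tendsto_nhdsWithin tendsto_arctan_atBot).comp h1
    simpa [if_pos h, Function.comp_def] using h2

lemma integral_inv_sub_inv (a b c d : ℝ) (hb : b ≠ 0) (hd : d ≠ 0) :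
    ∫ x : ℝ, (((x:ℂ) - (a + b*I))⁻¹ - ((x:ℂ) - (c + d*I))⁻¹) =
      ((π * ((if 0 < b then (1:ℝ) else -1) - (if 0 < d then (1:ℝ) else -1)) : ℝ) : ℂ) * I := by
  have hq1 : ∀ x : ℝ, (0:ℝ) < (x-a)^2+b^2 := fun x => by positivity
  have hq2 : ∀ x : ℝ, (0:ℝ) < (x-c)^2+d^2 := fun x => by positivity
  set sb := (if 0 < b then (1:ℝ) else -1) with hsb
  set sd := (if 0 < d then (1:ℝ) else -1) with hsd
  set u : ℝ → ℝ := fun x =>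
    (1/2) * Real.log ((x-a)^2+b^2) - (1/2) * Real.log ((x-c)^2+d^2) with hu
  set v : ℝ → ℝ := fun x => Real.arctan ((x-a)/b) - Real.arctan ((x-c)/d) with hv
  set F : ℝ → ℂ := fun x => (u x : ℂ) + (v x : ℂ) * I with hF
  have hFderiv : ∀ x : ℝ,
      HasDerivAt F (((x:ℂ) - (a + b*I))⁻¹ - ((x:ℂ) - (c + d*I))⁻¹) x := by
    intro x
    have hu1 : HasDerivAt (fun x : ℝ => (1/2) * Real.log ((x-a)^2+b^2))
        ((x-a)/((x-a)^2+b^2)) x := by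
      have hq : HasDerivAt (fun x : ℝ => (x-a)^2+b^2) (2*(x-a)) x := by
        have h := (((hasDerivAt_id x).sub_const a).pow 2).add_const (b^2)
        refine h.congr_deriv ?_; simp
      have h := (hq.log (hq1 x).ne').const_mul (1/2:ℝ)
      refine h.congr_deriv ?_
      field_simp
    have hu2 : HasDerivAt (fun x : ℝ => (1/2) * Real.log ((x-c)^2+d^2))
        ((x-c)/((x-c)^2+d^2)) x := by
      have hq : HasDerivAt (fun x : ℝ => (x-c)^2+d^2) (2*(x-c)) x := by
        have h := (((hasDerivAt_id x).sub_const c).pow 2).add_const (d^2)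
        refine h.congr_deriv ?_; simp
      have h := (hq.log (hq2 x).ne').const_mul (1/2:ℝ)
      refine h.congr_deriv ?_
      field_simp
    have hv1 : HasDerivAt (fun x : ℝ => Real.arctan ((x-a)/b)) (b/((x-a)^2+b^2)) x := by
      have hlin : HasDerivAt (fun x : ℝ => (x-a)/b) (1/b) x := by
        have h := ((hasDerivAt_id x).sub_const a).div_const b
        exact h
      have h := (Real.hasDerivAt_arctan ((x-a)/b)).comp x hlin
      refine h.congr_deriv ?_
      field_simp
      ring
    have hv2 : HasDerivAt (fun x : ℝ => Real.arctan ((x-c)/d)) (d/((x-c)^2+d^2)) x := by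
      have hlin : HasDerivAt (fun x : ℝ => (x-c)/d) (1/d) x := by
        have h := ((hasDerivAt_id x).sub_const c).div_const d
        exact h
      have h := (Real.hasDerivAt_arctan ((x-c)/d)).comp x hlin
      refine h.congr_deriv ?_
      field_simp
      ring
    have hud := hu1.sub hu2
    have hvd := hv1.sub hv2
    have hFd := (hud.ofReal_comp).add ((hvd.ofReal_comp).mul_const I)
    refine hFd.congr_deriv ?_
    rw [inv_ofReal_sub_eq x a b hb, inv_ofReal_sub_eq x c d hd]
    push_cast
    ring
  have hint := integrable_aux a b c d hb hd
  have hlog_top : Tendsto u atTop (𝓝 0) := by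
    have hr := ratio_tendsto a b c d hd atTop tendsto_inv_atTop_zero (eventually_ne_atTop 0)
    have hlog := (Real.continuousAt_log one_ne_zero).tendsto.comp hr
    rw [Real.log_one] at hlog
    have h := hlog.const_mul (1/2:ℝ)
    rw [mul_zero] at h
    apply h.congr
    intro x
    simp only [Function.comp]
    rw [Real.log_div (hq1 x).ne' (hq2 x).ne', hu]
    ring
  have hlog_bot : Tendsto u atBot (𝓝 0) := by
    have hr := ratio_tendsto a b c d hd atBot tendsto_inv_atBot_zero' (eventually_ne_atBot 0)
    have hlog := (Real.continuousAt_log one_ne_zero).tendsto.comp hr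
    rw [Real.log_one] at hlog
    have h := hlog.const_mul (1/2:ℝ)
    rw [mul_zero] at h
    apply h.congr
    intro x
    simp only [Function.comp]
    rw [Real.log_div (hq1 x).ne' (hq2 x).ne', hu]
    ring
  have hv_top : Tendsto v atTop (𝓝 (sb*(π/2) - sd*(π/2))) :=
    (arctan_lim_top a b hb).sub (arctan_lim_top c d hd)
  have hv_bot : Tendsto v atBot (𝓝 (-(sb*(π/2)) - -(sd*(π/2)))) :=
    (arctan_lim_bot a b hb).sub (arctan_lim_bot c d hd)
  have hF_top : Tendsto F atTop
      (𝓝 (((0:ℝ):ℂ) + ((sb*(π/2) - sd*(π/2) : ℝ):ℂ) * I)) :=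
    ((Complex.continuous_ofReal.tendsto _).comp hlog_top).add
      (((Complex.continuous_ofReal.tendsto _).comp hv_top).mul_const I)
  have hF_bot : Tendsto F atBot
      (𝓝 (((0:ℝ):ℂ) + ((-(sb*(π/2)) - -(sd*(π/2)) : ℝ):ℂ) * I)) :=
    ((Complex.continuous_ofReal.tendsto _).comp hlog_bot).add
      (((Complex.continuous_ofReal.tendsto _).comp hv_bot).mul_const I)
  rw [MeasureTheory.integral_of_hasDerivAt_of_tendsto hFderiv hint hF_bot hF_top]
  push_cast
  ring

end AuxLemmas

open Filter Topology in
/-- Residue-theorem evaluation of the integral of a product of `n + 1 ≥ 2`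
distinct inverse linear propagators `P_{l,i} = αᵢ + βᵢ l + iη`, with the
residue at the last pole eliminated using that the sum of all residues
vanishes:
`(1/(2πi)) ∫ dl ∏ᵢ 1/P_{l,i} = ∑_{i<n} (θ(-βᵢ) - θ(-βₙ)) / (βᵢ ∏_{j≠i} P_{l,j}(l⁽ⁱ⁾))`. -/
theorem multi_propagator_residue_formula
    (n : ℕ) (hn : 1 ≤ n) (α β : Fin (n + 1) → ℝ)
    (hβ : ∀ i, β i ≠ 0) (η : ℝ) (hη : 0 < η)
    (hdist : Function.Injective fun i : Fin (n + 1) =>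
      -(((α i : ℂ) + η * I)) / (β i)) :
    (2 * Real.pi * I)⁻¹ *
      ∫ l : ℝ, (∏ i, ((α i : ℂ) + β i * l + η * I))⁻¹
    = ∑ i : Fin n,
        ((heaviside (-β i.castSucc) : ℝ) - (heaviside (-β (Fin.last n)) : ℝ)) /
          ((β i.castSucc : ℂ) *
            ∏ j ∈ Finset.univ.erase i.castSucc,
              ((α j : ℂ) +
                β j * (-(((α i.castSucc : ℂ) + η * I)) / (β i.castSucc)) +
                η * I)) := by
  classical
  have hβc : ∀ i, (β i : ℂ) ≠ 0 := fun i => by exact_mod_cast hβ i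
  set z : Fin (n+1) → ℂ := fun i => -(((α i : ℂ) + η * I)) / (β i) with hz
  have hzim : ∀ i, z i = ((-α i/β i : ℝ) : ℂ) + ((-η/β i : ℝ) : ℂ) * I := by
    intro i
    rw [hz]
    push_cast
    field_simp
    ring
  have hinj : Function.Injective z := hdist
  have hbne : ∀ i, (-η/β i : ℝ) ≠ 0 := fun i => div_ne_zero (neg_ne_zero.mpr hη.ne') (hβ i)
  have hfact : ∀ (i) (l : ℝ), (α i:ℂ) + β i * l + η*I = β i * ((l:ℂ) - z i) := by
    intro i l
    rw [hz]
    have hbi := hβc i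
    field_simp
    ring
  have hfactc : ∀ i j, (α j:ℂ) + β j * z i + η*I = β j * (z i - z j) := by
    intro i j
    rw [hz]
    have hbi := hβc i
    have hbj := hβc j
    field_simp
    ring
  set c : Fin (n+1) → ℂ := fun i => ∏ j ∈ univ.erase i, (z i - z j)⁻¹ with hc
  have hcne : ∀ i, c i ≠ 0 := by
    intro i
    rw [hc]
    apply Finset.prod_ne_zero_iff.mpr
    intro j hj
    exact inv_ne_zero (sub_ne_zero.mpr fun h => (Finset.mem_erase.mp hj).1 (hinj h).symm)
  have hlnez : ∀ (l : ℝ) (i : Fin (n+1)), (l:ℂ) ≠ z i := by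
    intro l i h
    apply hbne i
    have h2 := congrArg Complex.im h
    rw [hzim i] at h2
    simpa using h2.symm
  have hPF : ∀ l : ℝ, (∏ i, ((l:ℂ) - z i))⁻¹ = ∑ i, c i * ((l:ℂ) - z i)⁻¹ := by
    intro l
    rw [← Finset.prod_inv_distrib]
    exact partial_fractions z univ univ_nonempty hinj.injOn l (fun i _ => hlnez l i)
  have hsum0 : ∑ i, c i = 0 := by
    rw [hc]
    exact sum_residues_zero z univ (by simp only [Finset.card_univ, Fintype.card_fin]; omega) hinj.injOn
  have hclast : c (Fin.last n) = -∑ i : Fin n, c i.castSucc := by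
    rw [Fin.sum_univ_castSucc] at hsum0
    linear_combination hsum0
  set B : ℂ := (∏ i, (β i : ℂ))⁻¹ with hB
  have hBne : B ≠ 0 := inv_ne_zero (Finset.prod_ne_zero_iff.mpr fun i _ => hβc i)
  -- rewrite integrand
  have hrw : ∀ l : ℝ, (∏ i, ((α i:ℂ) + β i * l + η*I))⁻¹
      = ∑ i : Fin n, (B * c i.castSucc) *
          (((l:ℂ) - z i.castSucc)⁻¹ - ((l:ℂ) - z (Fin.last n))⁻¹) := by
    intro l
    rw [Finset.prod_congr rfl (fun i _ => hfact i l), Finset.prod_mul_distrib, mul_inv,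
      hPF l, Fin.sum_univ_castSucc, hclast, neg_mul, Finset.sum_mul,
      ← sub_eq_add_neg, ← Finset.sum_sub_distrib, Finset.mul_sum]
    simp only [← hB]
    exact Finset.sum_congr rfl fun i _ => by ring
  rw [MeasureTheory.integral_congr_ae (Filter.Eventually.of_forall hrw)]
  have hInt : ∀ i : Fin n, Integrable
      (fun l : ℝ => ((l:ℂ) - z i.castSucc)⁻¹ - ((l:ℂ) - z (Fin.last n))⁻¹) := by
    intro i
    have h := integrable_aux (-α i.castSucc/β i.castSucc) (-η/β i.castSucc)
      (-α (Fin.last n)/β (Fin.last n)) (-η/β (Fin.last n)) (hbne _) (hbne _)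
    simp only [← hzim] at h
    exact h
  rw [MeasureTheory.integral_finset_sum _ (fun i _ => (hInt i).const_mul (B * c i.castSucc))]
  rw [Finset.mul_sum]
  apply Finset.sum_congr rfl
  intro i _
  rw [MeasureTheory.integral_const_mul]
  have hval : (∫ l : ℝ, (((l:ℂ) - z i.castSucc)⁻¹ - ((l:ℂ) - z (Fin.last n))⁻¹))
      = ((π * ((if 0 < -η/β i.castSucc then (1:ℝ) else -1)
          - (if 0 < -η/β (Fin.last n) then (1:ℝ) else -1)) : ℝ) : ℂ) * I := by
    have h := integral_inv_sub_inv (-α i.castSucc/β i.castSucc) (-η/β i.castSucc)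
      (-α (Fin.last n)/β (Fin.last n)) (-η/β (Fin.last n)) (hbne _) (hbne _)
    simp only [← hzim] at h
    exact h
  rw [hval]
  have hsign : ∀ j : Fin (n+1), (0 < -η/β j) ↔ (0 < -β j) := by
    intro j
    rw [div_pos_iff]
    constructor
    · rintro (⟨h1, h2⟩ | ⟨h1, h2⟩) <;> linarith
    · intro h
      right
      exact ⟨by linarith, by linarith⟩
  have h2 : (c i.castSucc)⁻¹ = ∏ j ∈ univ.erase i.castSucc, (z i.castSucc - z j) := by
    rw [hc]
    simp only [Finset.prod_inv_distrib, inv_inv]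
  have hden : (β i.castSucc : ℂ) * ∏ j ∈ Finset.univ.erase i.castSucc,
      ((α j : ℂ) + β j * (-(((α i.castSucc : ℂ) + η * I)) / (β i.castSucc)) + η * I)
      = B⁻¹ * (c i.castSucc)⁻¹ := by
    rw [Finset.prod_congr rfl fun j _ => hfactc i.castSucc j, Finset.prod_mul_distrib, h2]
    rw [hB, inv_inv, ← Finset.mul_prod_erase _ _ (Finset.mem_univ i.castSucc)]
    ring
  rw [hden]
  have hkey : (2*(π:ℂ)*I)⁻¹ * ((((π * ((if 0 < -η/β i.castSucc then (1:ℝ) else -1)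
          - (if 0 < -η/β (Fin.last n) then (1:ℝ) else -1)) : ℝ) : ℂ)) * I)
      = ((heaviside (-β i.castSucc) - heaviside (-β (Fin.last n)) : ℝ) : ℂ) := by
    simp only [hsign, heaviside]
    have hπ : (π:ℂ) ≠ 0 := by exact_mod_cast Real.pi_ne_zero
    by_cases h1 : 0 < -β i.castSucc <;> by_cases h2 : 0 < -β (Fin.last n) <;>
      simp only [h1, h2, if_true, if_false, if_pos, if_neg, not_false_iff] <;>
      push_cast <;>
      field_simp <;>
      first
        | ring
        | linear_combination (2:ℂ) * (π:ℂ) * Complex.I_sq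
        | linear_combination (-2:ℂ) * (π:ℂ) * Complex.I_sq
        | linear_combination (4:ℂ) * (π:ℂ) * Complex.I_sq
        | linear_combination (-4:ℂ) * (π:ℂ) * Complex.I_sq
  have hcast : (((heaviside (-β i.castSucc) : ℝ) : ℂ) - ((heaviside (-β (Fin.last n)) : ℝ) : ℂ))
      = ((heaviside (-β i.castSucc) - heaviside (-β (Fin.last n)) : ℝ) : ℂ) := by push_cast; ring
  have hfin : ∀ X : ℂ, X / (B⁻¹ * (c i.castSucc)⁻¹) = X * (B * c i.castSucc) := by
    intro X
    rw [div_eq_mul_inv, mul_inv, inv_inv, inv_inv]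
  rw [hfin]
  linear_combination (B * c i.castSucc) * hkey - (B * c i.castSucc) * hcast
end

section
/- Let f(x, y, z) be a product of inverse propagators of the form 1/((x + a + iη)(y + b + iη)(z + c + iη)·…) with η > 0 and real constants a, b, c,…, decaying sufficiently fast. Then ∫_{-∞}^{∞} ∫_{-∞}^{∞} f(l₃², (l₃+k₃)², k₃²) dl₃ dk₃ = -∫_{-∞}^{∞} ∫_{-∞}^{∞} f(-l₃², -(l₃+k₃)², -k₃²) dl₃ dk₃ (the orthogonal-space metric flip). -/
open MeasureTheory Set Complex Finset

section MetricFlipHelpers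
open Filter
variable {ι : Type*} (s : Finset ι) (α : ι → ℝ) (β : ι → ℂ)

lemma prod_factor_ne_zero (hα : ∀ i ∈ s, 0 < α i) (hβ : ∀ i ∈ s, 0 < (β i).im)
    {z : ℂ} (hz : 0 ≤ z.im) : (∏ i ∈ s, ((α i : ℂ) * z + β i)) ≠ 0 := by
  apply Finset.prod_ne_zero_iff.2
  intro i hi
  intro h
  have him : ((α i : ℂ) * z + β i).im = α i * z.im + (β i).im := by simp
  have : (0:ℝ) < α i * z.im + (β i).im :=
    add_pos_of_nonneg_of_pos (mul_nonneg (hα i hi).le hz) (hβ i hi)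
  rw [h] at him
  simp at him
  linarith

lemma factor_lower {m M : ℝ} (hm : 0 < m) (hM : 0 ≤ M)
    (hmα : ∀ i ∈ s, m ≤ α i) (hMβ : ∀ i ∈ s, ‖β i‖ ≤ M)
    {z : ℂ} (hz : 2 * (M + 1) / m ≤ ‖z‖) {i : ι} (hi : i ∈ s) :
    m * ‖z‖ / 2 ≤ ‖(α i : ℂ) * z + β i‖ ∧ 1 ≤ m * ‖z‖ / 2 := by
  have hz' : 2 * (M + 1) ≤ m * ‖z‖ := by
    rw [div_le_iff₀ hm] at hz; linarith [hz]
  have h1 : ‖(α i : ℂ) * z‖ = α i * ‖z‖ := by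
    rw [norm_mul, Complex.norm_real, Real.norm_eq_abs, abs_of_pos (lt_of_lt_of_le hm (hmα i hi))]
  have h2 : m * ‖z‖ ≤ α i * ‖z‖ :=
    mul_le_mul_of_nonneg_right (hmα i hi) (norm_nonneg _)
  have h3 : ‖(α i : ℂ) * z‖ ≤ ‖(α i : ℂ) * z + β i‖ + ‖β i‖ := by
    calc ‖(α i : ℂ) * z‖ = ‖((α i : ℂ) * z + β i) + (-β i)‖ := by ring_nf
      _ ≤ ‖(α i : ℂ) * z + β i‖ + ‖-β i‖ := norm_add_le _ _
      _ = ‖(α i : ℂ) * z + β i‖ + ‖β i‖ := by rw [norm_neg]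
  have := hMβ i hi
  constructor <;> linarith [h3, h1 ▸ h3]

lemma prod_inv_norm_le {m M : ℝ} (hm : 0 < m) (hM : 0 ≤ M)
    (hcard : 2 ≤ s.card)
    (hmα : ∀ i ∈ s, m ≤ α i) (hMβ : ∀ i ∈ s, ‖β i‖ ≤ M)
    {z : ℂ} (hz : 2 * (M + 1) / m ≤ ‖z‖) :
    ‖(∏ i ∈ s, ((α i : ℂ) * z + β i))⁻¹‖ ≤ (m * ‖z‖ / 2)⁻¹ ^ 2 := by
  have hone : 1 ≤ m * ‖z‖ / 2 := by
    rcases (Finset.card_pos.mp (by omega) : s.Nonempty) with ⟨i, hi⟩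
    exact (factor_lower s α β hm hM hmα hMβ hz hi).2
  have hprod : (m * ‖z‖ / 2) ^ s.card ≤ ‖∏ i ∈ s, ((α i : ℂ) * z + β i)‖ := by
    rw [norm_prod]
    calc (m * ‖z‖ / 2) ^ s.card = ∏ _i ∈ s, (m * ‖z‖ / 2) := by
          rw [Finset.prod_const]
      _ ≤ ∏ i ∈ s, ‖(α i : ℂ) * z + β i‖ :=
          Finset.prod_le_prod (fun i _ => by linarith) fun i hi =>
            (factor_lower s α β hm hM hmα hMβ hz hi).1
  have h2 : (m * ‖z‖ / 2) ^ 2 ≤ (m * ‖z‖ / 2) ^ s.card :=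
    pow_le_pow_right₀ hone hcard
  rw [norm_inv]
  rw [inv_pow]
  apply inv_anti₀ (by positivity)
  linarith

lemma cont_prod_inv (hβ : ∀ i ∈ s, 0 < (β i).im) (hα : ∀ i ∈ s, 0 < α i) :
    Continuous fun t : ℝ => (∏ i ∈ s, ((α i : ℂ) * t + β i))⁻¹ := by
  apply Continuous.inv₀
  · exact continuous_finset_prod _ fun i _ =>
      (continuous_const.mul Complex.continuous_ofReal).add continuous_const
  · intro t
    exact prod_factor_ne_zero s α β hα hβ (by simp)

lemma key_integrable (hcard : 2 ≤ s.card) (hα : ∀ i ∈ s, 0 < α i)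
    (hβ : ∀ i ∈ s, 0 < (β i).im) :
    Integrable fun t : ℝ => (∏ i ∈ s, ((α i : ℂ) * t + β i))⁻¹ := by
  have hs : s.Nonempty := Finset.card_pos.mp (by omega)
  set m := s.inf' hs α with hmdef
  have hm : 0 < m := (Finset.lt_inf'_iff hs).2 hα
  have hmα : ∀ i ∈ s, m ≤ α i := fun i hi => Finset.inf'_le _ hi
  set M := s.sup' hs fun i => ‖β i‖ with hMdef
  have hMβ : ∀ i ∈ s, ‖β i‖ ≤ M := fun i hi => Finset.le_sup' (f := fun i => ‖β i‖) hi
  have hM : 0 ≤ M := le_trans (norm_nonneg _) (hMβ _ hs.choose_spec)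
  set F := fun t : ℝ => (∏ i ∈ s, ((α i : ℂ) * t + β i))⁻¹ with hF
  have hcont : Continuous F := cont_prod_inv s α β hβ hα
  set R₀ : ℝ := max (2 * (M + 1) / m) 1 with hR₀
  obtain ⟨K, hK⟩ := (isCompact_Icc (a := -R₀) (b := R₀)).exists_bound_of_continuousOn
    hcont.continuousOn
  have hR₀1 : (1:ℝ) ≤ R₀ := le_max_right _ _
  have hK0 : 0 ≤ K :=
    le_trans (norm_nonneg (F (-R₀))) (hK _ (by constructor <;> linarith))
  set C : ℝ := max (8 / m ^ 2) (K * (1 + R₀ ^ 2)) with hC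
  have hbound : ∀ t : ℝ, ‖F t‖ ≤ C * (1 + t ^ 2)⁻¹ := by
    intro t
    rcases le_or_gt |t| R₀ with h | h
    · have ht2 : t ^ 2 ≤ R₀ ^ 2 := by
        nlinarith [abs_nonneg t, neg_abs_le t, le_abs_self t]
      have h1 : ‖F t‖ ≤ K := hK t (abs_le.mp h)
      have h2 : K ≤ C * (1 + t ^ 2)⁻¹ := by
        rw [← div_eq_mul_inv, le_div_iff₀ (by positivity)]
        calc K * (1 + t ^ 2) ≤ K * (1 + R₀ ^ 2) := by nlinarith
          _ ≤ C := le_max_right _ _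
      linarith
    · have hnz : 2 * (M + 1) / m ≤ ‖(t : ℂ)‖ := by
        rw [Complex.norm_real, Real.norm_eq_abs]
        exact le_trans (le_max_left _ _) h.le
      have h1 := prod_inv_norm_le s α β hm hM hcard hmα hMβ hnz
      have habs : ‖(t : ℂ)‖ = |t| := by rw [Complex.norm_real, Real.norm_eq_abs]
      rw [habs] at h1
      have ht1 : (1:ℝ) ≤ |t| := le_trans hR₀1 h.le
      have ht2 : (1:ℝ) ≤ t ^ 2 := by nlinarith [_root_.sq_abs t]
      have heq : (m * |t| / 2)⁻¹ ^ 2 = 4 / (m ^ 2 * t ^ 2) := by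
        rw [inv_pow, div_pow, mul_pow, _root_.sq_abs]
        rw [inv_eq_one_div, div_div_eq_mul_div, one_mul]
        norm_num
      rw [heq] at h1
      have h2 : 4 / (m ^ 2 * t ^ 2) ≤ C * (1 + t ^ 2)⁻¹ := by
        rw [← div_eq_mul_inv, div_le_div_iff₀ (by positivity) (by positivity)]
        have hC8 : 8 / m ^ 2 ≤ C := le_max_left _ _
        rw [div_le_iff₀ (by positivity)] at hC8
        nlinarith [sq_nonneg t, sq_nonneg m, mul_pos (pow_pos hm 2) (lt_of_lt_of_le one_pos ht2)]
      linarith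
  exact Integrable.mono' ((integrable_inv_one_add_sq).const_mul C)
    hcont.aestronglyMeasurable (Filter.Eventually.of_forall hbound)

lemma key_integral_zero (hcard : 2 ≤ s.card) (hα : ∀ i ∈ s, 0 < α i)
    (hβ : ∀ i ∈ s, 0 < (β i).im) :
    ∫ t : ℝ, (∏ i ∈ s, ((α i : ℂ) * t + β i))⁻¹ = 0 := by
  have hs : s.Nonempty := Finset.card_pos.mp (by omega)
  set m := s.inf' hs α with hmdef
  have hm : 0 < m := (Finset.lt_inf'_iff hs).2 hα
  have hmα : ∀ i ∈ s, m ≤ α i := fun i hi => Finset.inf'_le _ hi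
  set M := s.sup' hs fun i => ‖β i‖ with hMdef
  have hMβ : ∀ i ∈ s, ‖β i‖ ≤ M := fun i hi => Finset.le_sup' (f := fun i => ‖β i‖) hi
  have hM : 0 ≤ M := le_trans (norm_nonneg _) (hMβ _ hs.choose_spec)
  set G : ℂ → ℂ := fun z => (∏ i ∈ s, ((α i : ℂ) * z + β i))⁻¹ with hG
  set R₁ : ℝ := max (2 * (M + 1) / m) 1 with hR₁
  have hR₁0 : 0 < R₁ := lt_of_lt_of_le one_pos (le_max_right _ _)
  -- pointwise bound on G away from the origin
  have hGb : ∀ (R : ℝ) (z : ℂ), R₁ ≤ R → R ≤ ‖z‖ → ‖G z‖ ≤ (m * R / 2)⁻¹ ^ 2 := by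
    intro R z hR hz
    have h1 : 2 * (M + 1) / m ≤ ‖z‖ :=
      le_trans (le_max_left _ _) (le_trans hR hz)
    refine le_trans (prod_inv_norm_le s α β hm hM hcard hmα hMβ h1) ?_
    have h2 : 0 < m * R / 2 := div_pos (mul_pos hm (hR₁0.trans_le hR)) two_pos
    have h3 : m * R / 2 ≤ m * ‖z‖ / 2 := by
      have := mul_le_mul_of_nonneg_left hz hm.le
      linarith
    rw [inv_pow, inv_pow]
    exact inv_anti₀ (pow_pos h2 2) (pow_le_pow_left₀ h2.le h3 2)
  -- differentiability on the closed upper half plane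
  have hGd : ∀ z : ℂ, 0 ≤ z.im → DifferentiableAt ℂ G z := by
    intro z hz
    apply DifferentiableAt.inv
    · exact DifferentiableAt.fun_finsetProd fun i _ =>
        (differentiableAt_fun_id.const_mul _).add (differentiableAt_const _)
    · exact prod_factor_ne_zero s α β hα hβ hz
  -- the rectangle contour identity
  have rect : ∀ R : ℝ, 0 ≤ R →
      (∫ x : ℝ in (-R)..R, G (x + (0:ℝ) * I)) =
        (∫ x : ℝ in (-R)..R, G (x + R * I))
          - I • (∫ y : ℝ in (0:ℝ)..R, G (R + y * I))
          + I • (∫ y : ℝ in (0:ℝ)..R, G (-R + y * I)) := by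
    intro R hR
    have hdiff : DifferentiableOn ℂ G
        (Set.uIcc ((⟨-R, 0⟩ : ℂ).re) ((⟨R, R⟩ : ℂ).re) ×ℂ
          Set.uIcc ((⟨-R, 0⟩ : ℂ).im) ((⟨R, R⟩ : ℂ).im)) := by
      intro z hz
      rw [Complex.mem_reProdIm] at hz
      have h2 : z.im ∈ Set.Icc (0:ℝ) R := by
        have h3 := hz.2
        rwa [show ((⟨-R, 0⟩ : ℂ).im) = (0:ℝ) from rfl,
          show ((⟨R, R⟩ : ℂ).im) = R from rfl, Set.uIcc_of_le hR] at h3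
      exact (hGd z h2.1).differentiableWithinAt
    have H := Complex.integral_boundary_rect_eq_zero_of_differentiableOn G ⟨-R, 0⟩ ⟨R, R⟩ hdiff
    simp only [smul_eq_mul, Complex.ofReal_neg] at H ⊢
    linear_combination H
  -- each of the three boundary pieces tends to zero
  have hb0 : Tendsto (fun R : ℝ => (m * R / 2)⁻¹ ^ 2 * (2 * R)) atTop (nhds 0) := by
    have : Tendsto (fun R : ℝ => 8 / m ^ 2 * R⁻¹) atTop (nhds 0) := by
      simpa using (tendsto_inv_atTop_zero (𝕜 := ℝ)).const_mul (8 / m ^ 2)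
    apply this.congr'
    filter_upwards [eventually_gt_atTop (0:ℝ)] with R hR
    field_simp
    ring
  have htop : Tendsto (fun R : ℝ => ∫ x : ℝ in (-R)..R, G (x + R * I)) atTop (nhds 0) := by
    apply squeeze_zero_norm' _ hb0
    filter_upwards [eventually_ge_atTop R₁] with R hR
    have : ∀ x ∈ Set.uIoc (-R) R, ‖G (x + R * I)‖ ≤ (m * R / 2)⁻¹ ^ 2 := by
      intro x _
      apply hGb R _ hR
      calc R ≤ |(x + R * I : ℂ).im| := by simp [le_abs_self]
        _ ≤ ‖(x + R * I : ℂ)‖ := by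
            exact Complex.abs_im_le_norm _
    calc ‖∫ x : ℝ in (-R)..R, G (x + R * I)‖ ≤ (m * R / 2)⁻¹ ^ 2 * |R - (-R)| :=
          intervalIntegral.norm_integral_le_of_norm_le_const this
      _ = (m * R / 2)⁻¹ ^ 2 * (2 * R) := by
          rw [show |R - -R| = 2 * R by
            rw [_root_.abs_of_nonneg (by linarith [hR₁0.le.trans hR] : (0:ℝ) ≤ R - -R)]; ring]
  have hside : ∀ (sgn : ℝ), sgn = 1 ∨ sgn = -1 →
      Tendsto (fun R : ℝ => I • ∫ y : ℝ in (0:ℝ)..R, G (sgn * R + y * I)) atTop (nhds 0) := by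
    intro sgn hsgn
    apply squeeze_zero_norm' _ hb0
    filter_upwards [eventually_ge_atTop R₁] with R hR
    have hRpos : 0 ≤ R := hR₁0.le.trans hR
    have hbd : ∀ y ∈ Set.uIoc (0:ℝ) R, ‖G (sgn * R + y * I)‖ ≤ (m * R / 2)⁻¹ ^ 2 := by
      intro y _
      apply hGb R _ hR
      have hre : (sgn * R + y * I : ℂ).re = sgn * R := by simp
      calc R = |sgn * R| := by rcases hsgn with h | h <;> rw [h] <;>
              simp [_root_.abs_of_nonneg hRpos, abs_mul]
        _ = |(sgn * R + y * I : ℂ).re| := by rw [hre]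
        _ ≤ ‖(sgn * R + y * I : ℂ)‖ := by
            exact Complex.abs_re_le_norm _
    calc ‖I • ∫ y : ℝ in (0:ℝ)..R, G (sgn * R + y * I)‖
        = ‖∫ y : ℝ in (0:ℝ)..R, G (sgn * R + y * I)‖ := by
          rw [norm_smul, Complex.norm_I, one_mul]
      _ ≤ (m * R / 2)⁻¹ ^ 2 * |R - 0| :=
          intervalIntegral.norm_integral_le_of_norm_le_const hbd
      _ ≤ (m * R / 2)⁻¹ ^ 2 * (2 * R) := by
          rw [show |R - 0| = R by rw [sub_zero, _root_.abs_of_nonneg hRpos]]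
          have : (0:ℝ) ≤ (m * R / 2)⁻¹ ^ 2 := by positivity
          nlinarith
  -- combine
  have hrhs : Tendsto (fun R : ℝ =>
      (∫ x : ℝ in (-R)..R, G (x + R * I))
        - I • (∫ y : ℝ in (0:ℝ)..R, G (R + y * I))
        + I • (∫ y : ℝ in (0:ℝ)..R, G (-R + y * I))) atTop (nhds 0) := by
    have h1 := hside 1 (Or.inl rfl)
    have h2 := hside (-1) (Or.inr rfl)
    simp only [Complex.ofReal_one, Complex.ofReal_neg, one_mul, neg_one_mul] at h1 h2
    have := (htop.sub h1).add h2
    simpa using this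
  have hlhs : Tendsto (fun R : ℝ => ∫ x : ℝ in (-R)..R, G (x + (0:ℝ) * I)) atTop
      (nhds (∫ t : ℝ, (∏ i ∈ s, ((α i : ℂ) * t + β i))⁻¹)) := by
    have heq : (fun x : ℝ => G (x + (0:ℝ) * I)) =
        fun x : ℝ => (∏ i ∈ s, ((α i : ℂ) * x + β i))⁻¹ := by
      funext x
      simp [hG]
    rw [show (fun R : ℝ => ∫ x : ℝ in (-R)..R, G (x + (0:ℝ) * I)) =
        fun R : ℝ => ∫ x : ℝ in (-R)..R, (∏ i ∈ s, ((α i : ℂ) * x + β i))⁻¹ by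
          funext R; rw [heq]]
    exact intervalIntegral_tendsto_integral (key_integrable s α β hcard hα hβ)
      tendsto_neg_atTop_atBot tendsto_id
  have : Tendsto (fun R : ℝ => ∫ x : ℝ in (-R)..R, G (x + (0:ℝ) * I)) atTop (nhds 0) := by
    apply hrhs.congr'
    filter_upwards [eventually_ge_atTop (0:ℝ)] with R hR
    exact (rect R hR).symm
  exact tendsto_nhds_unique hlhs this

lemma sq_image_Ioi : (fun r : ℝ => r ^ 2) '' Set.Ioi 0 = Set.Ioi 0 := by
  ext t
  constructor
  · rintro ⟨r, hr, rfl⟩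
    exact pow_pos (Set.mem_Ioi.mp hr) 2
  · intro ht
    exact ⟨Real.sqrt t, Real.sqrt_pos.mpr ht, Real.sq_sqrt (le_of_lt ht)⟩

lemma half_integral_sq {F : ℝ → ℂ} (hF : Integrable F) :
    IntegrableOn (fun r : ℝ => r • F (r ^ 2)) (Set.Ioi 0) ∧
      ∫ r in Set.Ioi (0:ℝ), r • F (r ^ 2) = (2:ℝ)⁻¹ • ∫ t in Set.Ioi (0:ℝ), F t := by
  have hderiv : ∀ r ∈ Set.Ioi (0:ℝ), HasDerivWithinAt (fun r : ℝ => r ^ 2) (2 * r) (Set.Ioi 0) r :=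
    fun r _ => by simpa using ((hasDerivAt_pow 2 r).hasDerivWithinAt (s := Ioi 0))
  have hinj : InjOn (fun r : ℝ => r ^ 2) (Set.Ioi 0) := fun x hx y hy h => by
    simp only at h
    have hx0 : (0:ℝ) < x := hx
    have hy0 : (0:ℝ) < y := hy
    nlinarith
  have hiff := integrableOn_image_iff_integrableOn_abs_deriv_smul
    measurableSet_Ioi hderiv hinj F
  rw [sq_image_Ioi] at hiff
  have hint : IntegrableOn (fun r => |2 * r| • F (r ^ 2)) (Set.Ioi 0) :=
    hiff.mp hF.integrableOn
  have heqon : ∀ r ∈ Set.Ioi (0:ℝ), (2:ℝ)⁻¹ • (|2 * r| • F (r ^ 2)) = r • F (r ^ 2) := by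
    intro r hr
    rw [_root_.abs_of_nonneg (by linarith [Set.mem_Ioi.mp hr] : (0:ℝ) ≤ 2 * r), smul_smul]
    congr 1
    ring
  constructor
  · have h5 : IntegrableOn (fun r : ℝ => (2:ℝ)⁻¹ • (|2 * r| • F (r ^ 2))) (Set.Ioi 0) :=
      hint.smul ((2:ℝ)⁻¹)
    exact h5.congr_fun heqon measurableSet_Ioi
  · have himg := integral_image_eq_integral_abs_deriv_smul
      measurableSet_Ioi hderiv hinj F
    rw [sq_image_Ioi] at himg
    calc ∫ r in Set.Ioi (0:ℝ), r • F (r ^ 2)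
        = ∫ r in Set.Ioi (0:ℝ), (2:ℝ)⁻¹ • (|2 * r| • F (r ^ 2)) :=
          (setIntegral_congr_fun measurableSet_Ioi heqon).symm
      _ = (2:ℝ)⁻¹ • ∫ r in Set.Ioi (0:ℝ), |2 * r| • F (r ^ 2) := integral_smul _ _
      _ = (2:ℝ)⁻¹ • ∫ t in Set.Ioi (0:ℝ), F t := by rw [← himg]

lemma radial_zero {κ : Type*} [Fintype κ] (α : κ → ℝ) (β : κ → ℂ)
    (hα : ∀ i, 0 ≤ α i) (hβ : ∀ i, 0 < (β i).im)
    (h2 : ∃ i j : κ, i ≠ j ∧ 0 < α i ∧ 0 < α j) :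
    ∫ r in Set.Ioi (0:ℝ), r • ((∏ i, ((α i : ℂ) * (r ^ 2 : ℝ) + β i))⁻¹
        + (∏ i, ((α i : ℂ) * (-(r ^ 2) : ℝ) + β i))⁻¹) = 0 := by
  classical
  set S : Finset κ := Finset.univ.filter fun i => 0 < α i with hS
  have hcard : 2 ≤ S.card := by
    obtain ⟨i, j, hij, hi, hj⟩ := h2
    apply Finset.one_lt_card.mpr
    exact ⟨i, by simp [hS, hi], j, by simp [hS, hj], hij⟩
  have hαS : ∀ i ∈ S, 0 < α i := fun i hi => (Finset.mem_filter.mp hi).2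
  have hβS : ∀ i ∈ S, 0 < (β i).im := fun i _ => hβ i
  set c : ℂ := ∏ i ∈ Finset.univ.filter fun i => ¬ 0 < α i, β i with hc
  have hsplit : ∀ z : ℂ, (∏ i, ((α i : ℂ) * z + β i))
      = (∏ i ∈ S, ((α i : ℂ) * z + β i)) * c := by
    intro z
    rw [hc, ← Finset.prod_filter_mul_prod_filter_not Finset.univ (fun i => 0 < α i)]
    congr 1
    apply Finset.prod_congr rfl
    intro i hi
    have h0 : α i = 0 :=
      le_antisymm (not_lt.mp (Finset.mem_filter.mp hi).2) (hα i)
    simp [h0]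
  set FS : ℝ → ℂ := fun t => (∏ i ∈ S, ((α i : ℂ) * t + β i))⁻¹ with hFS
  have hFSint : Integrable FS := key_integrable S α β hcard hαS hβS
  have hFSzero : ∫ t : ℝ, FS t = 0 := key_integral_zero S α β hcard hαS hβS
  have hptwise : ∀ r : ℝ, r • ((∏ i, ((α i : ℂ) * (r ^ 2 : ℝ) + β i))⁻¹
        + (∏ i, ((α i : ℂ) * (-(r ^ 2) : ℝ) + β i))⁻¹)
      = (r • (FS (r ^ 2) + FS (-(r ^ 2)))) * c⁻¹ := by
    intro r
    rw [hsplit, hsplit, mul_inv, mul_inv]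
    simp only [hFS, smul_eq_mul, Complex.real_smul]
    push_cast
    ring
  rw [setIntegral_congr_fun measurableSet_Ioi fun r _ => hptwise r]
  rw [integral_mul_const]
  have h1 := half_integral_sq hFSint
  have h2' := half_integral_sq (F := fun t => FS (-t)) (hFSint.comp_neg)
  have hadd : ∫ r in Set.Ioi (0:ℝ), r • (FS (r ^ 2) + FS (-(r ^ 2)))
      = (∫ r in Set.Ioi (0:ℝ), r • FS (r ^ 2)) + ∫ r in Set.Ioi (0:ℝ), r • FS (-(r ^ 2)) := by
    have : (fun r : ℝ => r • (FS (r ^ 2) + FS (-(r ^ 2))))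
        = fun r : ℝ => r • FS (r ^ 2) + r • FS (-(r ^ 2)) := by
      funext r; rw [smul_add]
    rw [this]
    exact integral_add h1.1 h2'.1
  rw [hadd, h1.2, h2'.2]
  have hneg : ∫ t in Set.Ioi (0:ℝ), FS (-t) = ∫ t in Set.Iic (0:ℝ), FS t := by
    simpa using integral_comp_neg_Ioi (0:ℝ) FS
  rw [hneg, ← smul_add, add_comm]
  rw [intervalIntegral.integral_Iic_add_Ioi hFSint.integrableOn hFSint.integrableOn, hFSzero]
  simp

lemma integrableOn_polar {E : Type*} [NormedAddCommGroup E] [NormedSpace ℝ E]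
    (g : ℝ × ℝ → E) (hg : Integrable g) :
    IntegrableOn (fun p : ℝ × ℝ => p.1 • g (polarCoord.symm p)) polarCoord.target := by
  set B : ℝ × ℝ → ℝ × ℝ →L[ℝ] ℝ × ℝ := fun p =>
    LinearMap.toContinuousLinearMap (Matrix.toLin (Module.Basis.finTwoProd ℝ) (Module.Basis.finTwoProd ℝ)
      !![Real.cos p.2, -p.1 * Real.sin p.2; Real.sin p.2, p.1 * Real.cos p.2]) with hB
  have hBd : ∀ p ∈ polarCoord.target, HasFDerivWithinAt polarCoord.symm (B p)
      polarCoord.target p := fun p _ =>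
    (hasFDerivAt_polarCoord_symm p).hasFDerivWithinAt
  have B_det : ∀ p, (B p).det = p.1 := by
    intro p
    conv_rhs => rw [← one_mul p.1, ← Real.cos_sq_add_sin_sq p.2]
    simp only [hB, neg_mul, LinearMap.det_toContinuousLinearMap, LinearMap.det_toLin,
      Matrix.det_fin_two_of, sub_neg_eq_add]
    ring
  have hinj : InjOn polarCoord.symm polarCoord.target := polarCoord.symm.injOn
  have hiff := integrableOn_image_iff_integrableOn_abs_det_fderiv_smul volume
    polarCoord.open_target.measurableSet hBd hinj g
  have himg : polarCoord.symm '' polarCoord.target = polarCoord.source :=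
    polarCoord.symm.toPartialEquiv.image_source_eq_target
  rw [himg] at hiff
  have h1 : IntegrableOn (fun p => |(B p).det| • g (polarCoord.symm p)) polarCoord.target :=
    hiff.mp hg.integrableOn
  apply h1.congr_fun _ polarCoord.open_target.measurableSet
  intro p hp
  show |(B p).det| • g (polarCoord.symm p) = p.1 • g (polarCoord.symm p)
  rw [B_det, _root_.abs_of_pos hp.1]

end MetricFlipHelpers

/-- The orthogonal-space metric flip: for a product of inverse propagators
`f(x,y,z) = 1/(∏ᵢ (x + aᵢ + iη) · ∏ⱼ (y + bⱼ + iη) · ∏ₖ (z + cₖ + iη))`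
with `η > 0`, real constants and sufficiently fast decay (at least five
propagators in total, at least one in each argument),
`∬ f(l₃², (l₃+k₃)², k₃²) dl₃ dk₃ = -∬ f(-l₃², -(l₃+k₃)², -k₃²) dl₃ dk₃`. -/
theorem metric_flip_identity
    (A B C : ℕ) (hA : 1 ≤ A) (hB : 1 ≤ B) (hC : 1 ≤ C) (hABC : 5 ≤ A + B + C)
    (a : Fin A → ℝ) (b : Fin B → ℝ) (c : Fin C → ℝ) (η : ℝ) (hη : 0 < η)
    (f : ℂ → ℂ → ℂ → ℂ)
    (hf : ∀ x y z : ℂ, f x y z =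
      ((∏ i, (x + a i + η * I)) * (∏ j, (y + b j + η * I)) *
        (∏ k, (z + c k + η * I)))⁻¹)
    (h₁ : Integrable fun p : ℝ × ℝ =>
      f ((p.1 : ℂ) ^ 2) (((p.1 : ℂ) + p.2) ^ 2) ((p.2 : ℂ) ^ 2))
    (h₂ : Integrable fun p : ℝ × ℝ =>
      f (-(p.1 : ℂ) ^ 2) (-((p.1 : ℂ) + p.2) ^ 2) (-(p.2 : ℂ) ^ 2)) :
    ∫ p : ℝ × ℝ, f ((p.1 : ℂ) ^ 2) (((p.1 : ℂ) + p.2) ^ 2) ((p.2 : ℂ) ^ 2)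
      = -∫ p : ℝ × ℝ,
          f (-(p.1 : ℂ) ^ 2) (-((p.1 : ℂ) + p.2) ^ 2) (-(p.2 : ℂ) ^ 2) := by
  classical
  set αv : ℝ → (Fin A ⊕ (Fin B ⊕ Fin C)) → ℝ := fun θ =>
    Sum.elim (fun _ => Real.cos θ ^ 2)
      (Sum.elim (fun _ => (Real.cos θ + Real.sin θ) ^ 2) (fun _ => Real.sin θ ^ 2))
    with hαv_def
  set βv : (Fin A ⊕ (Fin B ⊕ Fin C)) → ℂ := Sum.elim (fun i => (a i : ℂ) + η * I)
      (Sum.elim (fun j => (b j : ℂ) + η * I) (fun k => (c k : ℂ) + η * I)) with hβv_def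
  have hβv : ∀ i, 0 < (βv i).im := by
    rintro (i | j | k) <;> simp [hβv_def, hη]
  have hαv : ∀ (θ : ℝ) i, 0 ≤ αv θ i := by
    rintro θ (i | j | k) <;> simp [hαv_def] <;> positivity
  have famP : ∀ (n : ℕ) (d : Fin n → ℝ) (u r : ℝ),
      (∏ i, (((r * u : ℝ) : ℂ) ^ 2 + d i + η * I))
        = ∏ i, (((u ^ 2 : ℝ) : ℂ) * ((r ^ 2 : ℝ) : ℂ) + ((d i : ℂ) + η * I)) := by
    intro n d u r
    refine Finset.prod_congr rfl fun i _ => ?_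
    push_cast
    ring
  have famN : ∀ (n : ℕ) (d : Fin n → ℝ) (u r : ℝ),
      (∏ i, (-((r * u : ℝ) : ℂ) ^ 2 + d i + η * I))
        = ∏ i, (((u ^ 2 : ℝ) : ℂ) * ((-(r ^ 2) : ℝ) : ℂ) + ((d i : ℂ) + η * I)) := by
    intro n d u r
    refine Finset.prod_congr rfl fun i _ => ?_
    push_cast
    ring
  have hpt : ∀ p : ℝ × ℝ,
      p.1 • ((f ((((polarCoord.symm p).1 : ℝ) : ℂ) ^ 2)
            (((((polarCoord.symm p).1 : ℝ) : ℂ) + (((polarCoord.symm p).2 : ℝ) : ℂ)) ^ 2)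
            ((((polarCoord.symm p).2 : ℝ) : ℂ) ^ 2))
          + (f (-((((polarCoord.symm p).1 : ℝ) : ℂ)) ^ 2)
            (-((((polarCoord.symm p).1 : ℝ) : ℂ) + (((polarCoord.symm p).2 : ℝ) : ℂ)) ^ 2)
            (-((((polarCoord.symm p).2 : ℝ) : ℂ)) ^ 2)))
      = p.1 • ((∏ i, ((αv p.2 i : ℂ) * ((p.1 ^ 2 : ℝ) : ℂ) + βv i))⁻¹
          + (∏ i, ((αv p.2 i : ℂ) * ((-(p.1 ^ 2) : ℝ) : ℂ) + βv i))⁻¹) := by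
    rintro ⟨r, θ⟩
    have hsymm : polarCoord.symm (r, θ) = (r * Real.cos θ, r * Real.sin θ) := rfl
    rw [hsymm]
    simp only [hf]
    have hm : ((r * Real.cos θ : ℝ) : ℂ) + ((r * Real.sin θ : ℝ) : ℂ)
        = ((r * (Real.cos θ + Real.sin θ) : ℝ) : ℂ) := by push_cast; ring
    rw [hm]
    simp only [hαv_def, hβv_def, Fintype.prod_sum_type, Sum.elim_inl, Sum.elim_inr]
    rw [famP A a (Real.cos θ) r, famP B b (Real.cos θ + Real.sin θ) r,
      famP C c (Real.sin θ) r, famN A a (Real.cos θ) r,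
      famN B b (Real.cos θ + Real.sin θ) r, famN C c (Real.sin θ) r]
    rw [mul_assoc, mul_assoc]
  have key : (∫ p : ℝ × ℝ,
      (f ((p.1 : ℂ) ^ 2) (((p.1 : ℂ) + p.2) ^ 2) ((p.2 : ℂ) ^ 2)
        + f (-(p.1 : ℂ) ^ 2) (-((p.1 : ℂ) + p.2) ^ 2) (-(p.2 : ℂ) ^ 2))) = 0 := by
    rw [← integral_comp_polarCoord_symm (fun p : ℝ × ℝ =>
      f ((p.1 : ℂ) ^ 2) (((p.1 : ℂ) + p.2) ^ 2) ((p.2 : ℂ) ^ 2)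
        + f (-(p.1 : ℂ) ^ 2) (-((p.1 : ℂ) + p.2) ^ 2) (-(p.2 : ℂ) ^ 2))]
    have hGint : IntegrableOn (fun p : ℝ × ℝ =>
        p.1 • ((∏ i, ((αv p.2 i : ℂ) * ((p.1 ^ 2 : ℝ) : ℂ) + βv i))⁻¹
          + (∏ i, ((αv p.2 i : ℂ) * ((-(p.1 ^ 2) : ℝ) : ℂ) + βv i))⁻¹))
        polarCoord.target := by
      refine (integrableOn_polar _ (h₁.add h₂)).congr_fun (fun p _ => hpt p)
        polarCoord.open_target.measurableSet
    rw [setIntegral_congr_fun polarCoord.open_target.measurableSet (fun p _ => hpt p)]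
    have htgt : polarCoord.target = Set.Ioi (0:ℝ) ×ˢ Set.Ioo (-Real.pi) Real.pi := rfl
    rw [htgt] at hGint ⊢
    rw [Measure.volume_eq_prod] at hGint ⊢
    simp only [IntegrableOn, ← Measure.prod_restrict] at hGint
    simp only [← Measure.prod_restrict]
    rw [MeasureTheory.integral_prod_symm _ hGint]
    apply integral_eq_zero_of_ae
    apply Filter.Eventually.of_forall
    intro θ
    show (∫ r in Set.Ioi (0:ℝ),
        r • ((∏ i, ((αv θ i : ℂ) * ((r ^ 2 : ℝ) : ℂ) + βv i))⁻¹
          + (∏ i, ((αv θ i : ℂ) * ((-(r ^ 2) : ℝ) : ℂ) + βv i))⁻¹)) = 0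
    have h2 : ∃ i j : Fin A ⊕ (Fin B ⊕ Fin C), i ≠ j ∧ 0 < αv θ i ∧ 0 < αv θ j := by
      by_cases hcos : Real.cos θ = 0
      · have hsin : Real.sin θ ≠ 0 := by
          intro h
          have := Real.sin_sq_add_cos_sq θ
          rw [h, hcos] at this
          norm_num at this
        refine ⟨Sum.inr (Sum.inl ⟨0, hB⟩), Sum.inr (Sum.inr ⟨0, hC⟩), by simp, ?_, ?_⟩
        · show (0:ℝ) < (Real.cos θ + Real.sin θ) ^ 2
          rw [hcos, zero_add]
          exact (sq_nonneg _).lt_of_ne (Ne.symm (pow_ne_zero 2 hsin))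
        · show (0:ℝ) < Real.sin θ ^ 2
          exact (sq_nonneg _).lt_of_ne (Ne.symm (pow_ne_zero 2 hsin))
      · by_cases hsin : Real.sin θ = 0
        · refine ⟨Sum.inl ⟨0, hA⟩, Sum.inr (Sum.inl ⟨0, hB⟩), by simp, ?_, ?_⟩
          · show (0:ℝ) < Real.cos θ ^ 2
            exact (sq_nonneg _).lt_of_ne (Ne.symm (pow_ne_zero 2 hcos))
          · show (0:ℝ) < (Real.cos θ + Real.sin θ) ^ 2
            rw [hsin, add_zero]
            exact (sq_nonneg _).lt_of_ne (Ne.symm (pow_ne_zero 2 hcos))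
        · refine ⟨Sum.inl ⟨0, hA⟩, Sum.inr (Sum.inr ⟨0, hC⟩), by simp, ?_, ?_⟩
          · show (0:ℝ) < Real.cos θ ^ 2
            exact (sq_nonneg _).lt_of_ne (Ne.symm (pow_ne_zero 2 hcos))
          · show (0:ℝ) < Real.sin θ ^ 2
            exact (sq_nonneg _).lt_of_ne (Ne.symm (pow_ne_zero 2 hsin))
    exact radial_zero (αv θ) βv (hαv θ) hβv h2
  rw [integral_add h₁ h₂] at key
  exact eq_neg_of_add_eq_zero_left key
end

section
/- Let f(v) = 1/∏_{i=1}^{n}(c_i v² + r_i + iη) with n ≥ 2, c_i > 0, r_i ∈ ℝ, η > 0 (so f has no poles in the closed fourth quadrant and decays like |v|^{-2n}). Then ∫_0^∞ v f(v) dv = -∫_0^∞ v f(-i v') dv' after rotating the contour clockwise through the fourth quadrant; equivalently, ∫_0^∞ v f(v) dv = -∫_0^∞ w f evaluated with v² replaced by -w², i.e. ∫_0^∞ v/∏(c_i v² + r_i + iη) dv = -∫_0^∞ w/∏(-c_i w² + r_i + iη) dw. -/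
open MeasureTheory Set Complex Finset

namespace ContourRotAux

variable {n : ℕ} {c r : Fin n → ℝ} {η : ℝ}

noncomputable def F (c r : Fin n → ℝ) (η : ℝ) : ℂ → ℂ :=
  fun u => (∏ i, ((c i : ℂ) * u + (r i : ℂ) + (η : ℂ) * I))⁻¹

lemma factor_im (i : Fin n) (u : ℂ) :
    ((c i : ℂ) * u + (r i : ℂ) + (η : ℂ) * I).im = c i * u.im + η := by simp

lemma key_bound' (m : ℝ) (hm : 0 < m) (u : ℂ)
    (h : ∀ i, m ≤ ‖(c i : ℂ) * u + (r i : ℂ) + (η : ℂ) * I‖) :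
    ‖F c r η u‖ ≤ (m ^ n)⁻¹ := by
  have h1 : m ^ n ≤ ∏ i, ‖(c i : ℂ) * u + (r i : ℂ) + (η : ℂ) * I‖ := by
    calc m ^ n = ∏ _i : Fin n, m := by
          rw [Finset.prod_const, Finset.card_univ, Fintype.card_fin]
      _ ≤ _ := Finset.prod_le_prod (fun i _ => hm.le) (fun i _ => h i)
  rw [F, norm_inv, norm_prod]
  exact inv_anti₀ (by positivity) h1

lemma key_bound (hn : 2 ≤ n) (m : ℝ) (hm : 1 ≤ m) (u : ℂ)
    (h : ∀ i, m ≤ ‖(c i : ℂ) * u + (r i : ℂ) + (η : ℂ) * I‖) :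
    ‖F c r η u‖ ≤ (m ^ 2)⁻¹ :=
  (key_bound' m (by linarith) u h).trans
    (inv_anti₀ (by positivity) (pow_le_pow_right₀ hm hn))

lemma factor_norm_ge_im (i : Fin n) (u : ℂ) :
    c i * u.im + η ≤ ‖(c i : ℂ) * u + (r i : ℂ) + (η : ℂ) * I‖ := by
  have h := Complex.abs_im_le_norm ((c i : ℂ) * u + (r i : ℂ) + (η : ℂ) * I)
  rw [factor_im] at h
  exact le_trans (le_abs_self _) h

lemma factor_norm_ge_re (i : Fin n) (u : ℂ) :
    |c i * u.re + r i| ≤ ‖(c i : ℂ) * u + (r i : ℂ) + (η : ℂ) * I‖ := by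
  have h := Complex.abs_re_le_norm ((c i : ℂ) * u + (r i : ℂ) + (η : ℂ) * I)
  simp only [Complex.add_re, Complex.mul_re, Complex.ofReal_re, Complex.ofReal_im,
    Complex.mul_im, Complex.I_re, Complex.I_im] at h
  calc |c i * u.re + r i| = |(c i * u.re - 0 * u.im + r i + (η * 0 - 0 * 1))| := by ring_nf
    _ ≤ _ := h

lemma factor_ne_zero (hc : ∀ i, 0 < c i) (hη : 0 < η) (i : Fin n) (u : ℂ)
    (hu : 0 ≤ u.im) : (c i : ℂ) * u + (r i : ℂ) + (η : ℂ) * I ≠ 0 := by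
  intro h
  have him := congrArg Complex.im h
  rw [factor_im] at him
  simp only [Complex.zero_im] at him
  nlinarith [(hc i), mul_nonneg (hc i).le hu]

lemma F_differentiableAt (hc : ∀ i, 0 < c i) (hη : 0 < η) {u : ℂ} (hu : 0 ≤ u.im) :
    DifferentiableAt ℂ (F c r η) u := by
  apply DifferentiableAt.inv
  · exact DifferentiableAt.fun_finsetProd fun i _ =>
      (((differentiable_const _).mul differentiable_id).add_const _).differentiableAt.add_const _
  · exact Finset.prod_ne_zero_iff.2 fun i _ => factor_ne_zero hc hη i u hu

section main

variable (hn : 2 ≤ n) (hc : ∀ i, 0 < c i) (hη : 0 < η)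
include hn hc hη

lemma continuous_G : Continuous fun x : ℝ => F c r η x := by
  rw [continuous_iff_continuousAt]
  intro x
  exact (F_differentiableAt hc hη (by simp)).continuousAt.comp
    Complex.continuous_ofReal.continuousAt

lemma integrable_G : Integrable fun x : ℝ => F c r η x := by
  have hne : (Finset.univ : Finset (Fin n)).Nonempty := ⟨⟨0, by omega⟩, Finset.mem_univ _⟩
  obtain ⟨b, hb, hble⟩ : ∃ b : ℝ, 0 < b ∧ ∀ i, b ≤ c i :=
    ⟨Finset.univ.inf' hne c, (Finset.lt_inf'_iff hne).2 fun i _ => hc i,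
      fun i => Finset.inf'_le c (Finset.mem_univ i)⟩
  obtain ⟨ρ, hρ0, hρ⟩ : ∃ ρ : ℝ, 0 ≤ ρ ∧ ∀ i, |r i| ≤ ρ :=
    ⟨Finset.univ.sup' hne (fun j => |r j|),
      le_trans (abs_nonneg _) (Finset.le_sup' (fun j => |r j|) (Finset.mem_univ ⟨0, by omega⟩)),
      fun i => Finset.le_sup' (fun j => |r j|) (Finset.mem_univ i)⟩
  set M : ℝ := max (2 * (ρ + 1) / b) 1 with hMdef
  have hM1 : 1 ≤ M := le_max_right _ _
  have hM2 : 2 * (ρ + 1) / b ≤ M := le_max_left _ _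
  have hM2' : 2 * (ρ + 1) ≤ b * M := by
    rw [div_le_iff₀ hb] at hM2; linarith [hM2]
  set K : ℝ := max (8 / b ^ 2) ((1 + M ^ 2) * (η ^ n)⁻¹) with hKdef
  have hbound : ∀ x : ℝ, ‖F c r η x‖ ≤ K * (1 + x ^ 2)⁻¹ := by
    intro x
    rcases le_total |x| M with hx | hx
    · have h1 : ‖F c r η x‖ ≤ (η ^ n)⁻¹ := by
        apply key_bound' η hη
        intro i
        have := factor_norm_ge_im (η := η) (c := c) (r := r) i (x : ℂ)
        simpa using this
      have h2 : (1 : ℝ) + x ^ 2 ≤ 1 + M ^ 2 := by nlinarith [_root_.sq_abs x, _root_.abs_nonneg x]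
      have h3 : (0:ℝ) < 1 + x ^ 2 := by positivity
      refine h1.trans ?_
      rw [← div_eq_mul_inv, le_div_iff₀ h3]
      calc (η ^ n)⁻¹ * (1 + x ^ 2) ≤ (η ^ n)⁻¹ * (1 + M ^ 2) :=
            mul_le_mul_of_nonneg_left h2 (by positivity)
        _ = (1 + M ^ 2) * (η ^ n)⁻¹ := mul_comm _ _
        _ ≤ K := le_max_right _ _
    · have hx1 : 1 ≤ |x| := le_trans hM1 hx
      have h1 : ‖F c r η x‖ ≤ ((b * |x| / 2) ^ 2)⁻¹ := by
        apply key_bound hn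
        · nlinarith [hM2', mul_le_mul_of_nonneg_left hx hb.le]
        · intro i
          have h := factor_norm_ge_re (η := η) (c := c) (r := r) i (x : ℂ)
          simp only [Complex.ofReal_re] at h
          refine le_trans ?_ h
          have hcx : b * |x| ≤ c i * |x| := mul_le_mul_of_nonneg_right (hble i) (abs_nonneg _)
          have : c i * |x| - |r i| ≤ |c i * x + r i| := by
            have := abs_sub_abs_le_abs_sub (c i * x + r i) (r i)
            simp only [add_sub_cancel_right] at this
            calc c i * |x| - |r i| = |c i * x| - |r i| := by
                  rw [abs_mul, abs_of_pos (hc i)]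
              _ ≤ |c i * x + r i| := by
                  have h2 := abs_add_le (c i * x + r i) (-(r i))
                  simp only [add_neg_cancel_right, abs_neg] at h2
                  linarith
          have hbig : 2 * (ρ + 1) ≤ b * |x| := le_trans hM2' (by nlinarith)
          have := hρ i
          nlinarith
      refine h1.trans ?_
      have e1 : (b * |x| / 2) ^ 2 = b ^ 2 * x ^ 2 / 4 := by
        rw [div_pow, mul_pow, _root_.sq_abs]; norm_num
      have e2 : (8 / b ^ 2) * (1 + x ^ 2)⁻¹ = 8 / (b ^ 2 * (1 + x ^ 2)) := by
        rw [← div_eq_mul_inv, div_div]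
      have hx2 : (0:ℝ) < x ^ 2 := by nlinarith [_root_.sq_abs x]
      have final : 4 / (b ^ 2 * x ^ 2) ≤ 8 / (b ^ 2 * (1 + x ^ 2)) := by
        have hx3 : (1:ℝ) ≤ x ^ 2 := by nlinarith [_root_.sq_abs x, hx1]
        rw [div_le_div_iff₀ (by positivity) (by positivity)]
        nlinarith [hx3, sq_nonneg b, mul_pos hb hb]
      calc ((b * |x| / 2) ^ 2)⁻¹ = 4 / (b ^ 2 * x ^ 2) := by rw [e1, _root_.inv_div]
        _ ≤ 8 / (b ^ 2 * (1 + x ^ 2)) := final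
        _ = (8 / b ^ 2) * (1 + x ^ 2)⁻¹ := e2.symm
        _ ≤ K * (1 + x ^ 2)⁻¹ :=
            mul_le_mul_of_nonneg_right (le_max_left _ _) (by positivity)
  have hK0 : 0 ≤ K := le_trans (by positivity) (le_max_left _ _)
  apply Integrable.mono' ((integrable_inv_one_add_sq).const_mul K)
  · exact (continuous_G hn hc hη).aestronglyMeasurable
  · exact ae_of_all _ fun x => by simpa using hbound x

lemma integral_G_eq_zero : ∫ x : ℝ, F c r η x = 0 := by
  have hne : (Finset.univ : Finset (Fin n)).Nonempty := ⟨⟨0, by omega⟩, Finset.mem_univ _⟩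
  obtain ⟨b, hb, hble⟩ : ∃ b : ℝ, 0 < b ∧ ∀ i, b ≤ c i :=
    ⟨Finset.univ.inf' hne c, (Finset.lt_inf'_iff hne).2 fun i _ => hc i,
      fun i => Finset.inf'_le c (Finset.mem_univ i)⟩
  obtain ⟨ρ, hρ0, hρ⟩ : ∃ ρ : ℝ, 0 ≤ ρ ∧ ∀ i, |r i| ≤ ρ :=
    ⟨Finset.univ.sup' hne (fun j => |r j|),
      le_trans (abs_nonneg _) (Finset.le_sup' (fun j => |r j|) (Finset.mem_univ ⟨0, by omega⟩)),
      fun i => Finset.le_sup' (fun j => |r j|) (Finset.mem_univ i)⟩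
  set M : ℝ := max (2 * (ρ + 1) / b) 1 with hMdef
  have hM1 : 1 ≤ M := le_max_right _ _
  have hM2 : 2 * (ρ + 1) / b ≤ M := le_max_left _ _
  have hM2' : 2 * (ρ + 1) ≤ b * M := by
    rw [div_le_iff₀ hb] at hM2; linarith [hM2]
  have hbd : ∀ R : ℝ, M ≤ R → ‖∫ x in (-R)..R, F c r η x‖ ≤ 16 / b ^ 2 / R := by
    intro R hR
    have hR1 : (1:ℝ) ≤ R := le_trans hM1 hR
    have hR0 : (0:ℝ) < R := by linarith
    have hbR : 2 * (ρ + 1) ≤ b * R :=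
      le_trans hM2' (mul_le_mul_of_nonneg_left hR hb.le)
    set m : ℝ := b * R / 2 with hmdef
    have hm1 : 1 ≤ m := by rw [hmdef]; nlinarith
    have hm0 : (0:ℝ) < m := by linarith
    -- the rectangle contour
    have E := Complex.integral_boundary_rect_eq_zero_of_differentiableOn (F c r η)
        (((-R : ℝ)) : ℂ) ((R : ℝ) + (R : ℝ) * I) (by
      intro u hu
      refine (F_differentiableAt hc hη ?_).differentiableWithinAt
      rw [Complex.mem_reProdIm] at hu
      have h2 := hu.2
      simp only [Complex.ofReal_im, Complex.add_im, Complex.mul_im, Complex.I_im,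
        Complex.I_re, Complex.ofReal_re, mul_zero, mul_one, zero_mul, zero_add,
        sub_zero, add_zero] at h2
      rw [Set.uIcc_of_le (by linarith : (0:ℝ) ≤ R)] at h2
      exact h2.1)
    simp only [Complex.ofReal_re, Complex.ofReal_im, Complex.add_re, Complex.add_im,
      Complex.neg_re, Complex.neg_im, neg_zero, neg_neg,
      Complex.mul_re, Complex.mul_im, Complex.I_re, Complex.I_im, mul_zero, mul_one,
      zero_mul, sub_zero, add_zero, zero_add, Complex.ofReal_zero, Complex.ofReal_neg] at E
    -- rearrange
    have Ebot : (∫ x in (-R)..R, F c r η x)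
        = (∫ x in (-R)..R, F c r η (x + (R:ℝ) * I))
          - I • (∫ y in (0:ℝ)..R, F c r η ((R:ℝ) + y * I))
          + I • (∫ y in (0:ℝ)..R, F c r η (-(R:ℝ) + y * I)) := by
      linear_combination E
    have htop : ‖∫ x in (-R)..R, F c r η (x + (R:ℝ) * I)‖ ≤ (m ^ 2)⁻¹ * |R - (-R)| := by
      apply intervalIntegral.norm_integral_le_of_norm_le_const
      intro x hx
      apply key_bound hn m hm1
      intro i
      refine le_trans ?_ (factor_norm_ge_im i _)
      have him : ((x:ℂ) + (R:ℝ) * I).im = R := by simp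
      rw [him]
      have : b * R ≤ c i * R := mul_le_mul_of_nonneg_right (hble i) hR0.le
      rw [hmdef]; linarith
    have hs1 : ‖∫ y in (0:ℝ)..R, F c r η ((R:ℝ) + y * I)‖ ≤ (m ^ 2)⁻¹ * |R - 0| := by
      apply intervalIntegral.norm_integral_le_of_norm_le_const
      intro y hy
      apply key_bound hn m hm1
      intro i
      refine le_trans ?_ (factor_norm_ge_re i _)
      have hre : (((R:ℝ):ℂ) + (y:ℝ) * I).re = R := by simp
      rw [hre]
      have h1 : b * R ≤ c i * R := mul_le_mul_of_nonneg_right (hble i) hR0.le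
      have h2 := hρ i
      have h3 : m ≤ c i * R + r i := by
        rw [hmdef]; nlinarith [neg_abs_le (r i)]
      exact le_trans h3 (le_abs_self _)
    have hs2 : ‖∫ y in (0:ℝ)..R, F c r η (-(R:ℝ) + y * I)‖ ≤ (m ^ 2)⁻¹ * |R - 0| := by
      apply intervalIntegral.norm_integral_le_of_norm_le_const
      intro y hy
      apply key_bound hn m hm1
      intro i
      refine le_trans ?_ (factor_norm_ge_re i _)
      have hre : ((-(R:ℝ):ℂ) + (y:ℝ) * I).re = -R := by simp
      rw [hre]
      have h1 : b * R ≤ c i * R := mul_le_mul_of_nonneg_right (hble i) hR0.le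
      have h2 := hρ i
      have h3 : c i * (-R) + r i ≤ -m := by
        rw [hmdef]
        have h4 : r i ≤ ρ := le_trans (le_abs_self _) h2
        nlinarith
      calc m ≤ -(c i * (-R) + r i) := by linarith
        _ ≤ |c i * (-R) + r i| := neg_le_abs _
    have habs1 : |R - (-R)| = 2 * R := by rw [_root_.abs_of_nonneg (by linarith : (0:ℝ) ≤ R - (-R))]; ring
    have habs2 : |R - (0:ℝ)| = R := by rw [sub_zero, _root_.abs_of_nonneg hR0.le]
    have hIs1 : ‖I • ∫ y in (0:ℝ)..R, F c r η ((R:ℝ) + y * I)‖ ≤ (m ^ 2)⁻¹ * R := by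
      rw [norm_smul, Complex.norm_I, one_mul]
      exact le_trans hs1 (by rw [habs2])
    have hIs2 : ‖I • ∫ y in (0:ℝ)..R, F c r η (-(R:ℝ) + y * I)‖ ≤ (m ^ 2)⁻¹ * R := by
      rw [norm_smul, Complex.norm_I, one_mul]
      exact le_trans hs2 (by rw [habs2])
    have hnorm : ‖∫ x in (-R)..R, F c r η x‖
        ≤ (m ^ 2)⁻¹ * (2 * R) + (m ^ 2)⁻¹ * R + (m ^ 2)⁻¹ * R := by
      rw [Ebot]
      calc ‖_ - _ + _‖ ≤ ‖(∫ x in (-R)..R, F c r η (x + (R:ℝ) * I))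
              - I • (∫ y in (0:ℝ)..R, F c r η ((R:ℝ) + y * I))‖
            + ‖I • (∫ y in (0:ℝ)..R, F c r η (-(R:ℝ) + y * I))‖ := norm_add_le _ _
        _ ≤ ‖∫ x in (-R)..R, F c r η (x + (R:ℝ) * I)‖
            + ‖I • (∫ y in (0:ℝ)..R, F c r η ((R:ℝ) + y * I))‖
            + ‖I • (∫ y in (0:ℝ)..R, F c r η (-(R:ℝ) + y * I))‖ := by
              have := norm_sub_le (∫ x in (-R)..R, F c r η (x + (R:ℝ) * I))
                (I • (∫ y in (0:ℝ)..R, F c r η ((R:ℝ) + y * I)))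
              linarith
        _ ≤ (m ^ 2)⁻¹ * (2 * R) + (m ^ 2)⁻¹ * R + (m ^ 2)⁻¹ * R := by
              have := habs1 ▸ htop
              linarith [hIs1, hIs2]
    refine le_trans hnorm (le_of_eq ?_)
    rw [hmdef]
    field_simp
    ring
  have h1 : Filter.Tendsto (fun R : ℝ => ∫ x in (-R)..R, F c r η x)
      Filter.atTop (nhds (∫ x : ℝ, F c r η x)) :=
    intervalIntegral_tendsto_integral (integrable_G hn hc hη)
      Filter.tendsto_neg_atTop_atBot Filter.tendsto_id
  have h2 : Filter.Tendsto (fun R : ℝ => ∫ x in (-R)..R, F c r η x)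
      Filter.atTop (nhds 0) := by
    apply squeeze_zero_norm' (Filter.eventually_atTop.2 ⟨M, hbd⟩)
    have : Filter.Tendsto (fun R : ℝ => 16 / b ^ 2 / R) Filter.atTop (nhds 0) :=
      Filter.Tendsto.div_atTop tendsto_const_nhds Filter.tendsto_id
    exact this
  exact tendsto_nhds_unique h1 h2

end main
end ContourRotAux


open ContourRotAux in
/-- Rotating the contour clockwise through the fourth quadrant: for
`f(v) = 1/∏ᵢ (cᵢ v² + rᵢ + iη)` with `n ≥ 2`, `cᵢ > 0`, `rᵢ ∈ ℝ`, `η > 0`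
(so `f` has no poles in the closed fourth quadrant and decays like
`|v|^{-2n}`), one has
`∫₀^∞ v/∏(cᵢ v² + rᵢ + iη) dv = -∫₀^∞ w/∏(-cᵢ w² + rᵢ + iη) dw`. -/
theorem contour_rotation_fourth_quadrant
    (n : ℕ) (hn : 2 ≤ n) (c r : Fin n → ℝ) (hc : ∀ i, 0 < c i)
    (η : ℝ) (hη : 0 < η) :
    ∫ v in Ioi (0 : ℝ),
        (v : ℂ) / ∏ i, ((c i : ℂ) * (v : ℂ) ^ 2 + r i + η * I)
      = -∫ w in Ioi (0 : ℝ),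
          (w : ℂ) / ∏ i, (-(c i : ℂ) * (w : ℂ) ^ 2 + r i + η * I) := by
  have hInt : Integrable fun x : ℝ => F c r η x := integrable_G hn hc hη
  have hzero : ∫ x : ℝ, F c r η x = 0 := integral_G_eq_zero hn hc hη
  have hpt : ∀ (d : Fin n → ℝ) (v : ℝ), 0 < v →
      (v : ℂ) / ∏ i, ((d i : ℂ) * (v : ℂ) ^ 2 + r i + η * I)
      = (2:ℂ)⁻¹ • ((|2| * v ^ ((2:ℝ) - 1)) • F d r η ((v ^ (2:ℝ) : ℝ) : ℂ)) := by
    intro d v hv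
    have h1 : (v:ℝ) ^ ((2:ℝ) - 1) = v := by norm_num
    have h2 : (v:ℝ) ^ (2:ℝ) = v ^ 2 := by
      rw [show (2:ℝ) = ((2:ℕ):ℝ) by norm_num, Real.rpow_natCast]
    rw [h1, h2, F]
    simp only [Complex.real_smul, smul_eq_mul, _root_.abs_two]
    push_cast
    rw [div_eq_mul_inv]
    ring
  have L1 : (∫ v in Ioi (0:ℝ), (v : ℂ) / ∏ i, ((c i : ℂ) * (v : ℂ) ^ 2 + r i + η * I))
      = (2:ℂ)⁻¹ • ∫ u in Ioi (0:ℝ), F c r η u := by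
    rw [← integral_comp_rpow_Ioi (fun u : ℝ => F c r η u) (two_ne_zero : (2:ℝ) ≠ 0),
      ← integral_smul]
    exact setIntegral_congr_fun measurableSet_Ioi fun v hv => hpt c v hv
  have L2 : (∫ w in Ioi (0:ℝ), (w : ℂ) / ∏ i, (-(c i : ℂ) * (w : ℂ) ^ 2 + r i + η * I))
      = (2:ℂ)⁻¹ • ∫ u in Ioi (0:ℝ), F (fun i => -(c i)) r η u := by
    rw [← integral_comp_rpow_Ioi (fun u : ℝ => F (fun i => -(c i)) r η u)
      (two_ne_zero : (2:ℝ) ≠ 0), ← integral_smul]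
    refine setIntegral_congr_fun measurableSet_Ioi fun v hv => ?_
    have := hpt (fun i => -(c i)) v hv
    simpa using this
  have L3 : (∫ u in Ioi (0:ℝ), F (fun i => -(c i)) r η u)
      = ∫ x in Iic (0:ℝ), F c r η x := by
    have he : ∀ u : ℝ, F (fun i => -(c i)) r η u = F c r η (-(u:ℝ)) := by
      intro u
      rw [F, F]
      congr 1
      refine Finset.prod_congr rfl fun i _ => ?_
      push_cast
      ring
    have key := integral_comp_neg_Ioi (0:ℝ) (fun x : ℝ => F c r η x)
    rw [neg_zero] at key
    rw [← key]
    refine setIntegral_congr_fun measurableSet_Ioi fun u _ => ?_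
    simpa [Complex.ofReal_neg] using he u
  have hsplit : (∫ x in Iic (0:ℝ), F c r η x) + (∫ x in Ioi (0:ℝ), F c r η x) = 0 := by
    rw [intervalIntegral.integral_Iic_add_Ioi hInt.integrableOn hInt.integrableOn]
    exact hzero
  rw [L1, L2, L3, smul_eq_mul, smul_eq_mul]
  linear_combination (2:ℂ)⁻¹ * hsplit
end
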